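/- Let X be a left distributive idempotent birack and let k ≥ 1. Then the following are equivalent: (i) X is left k-reductive; (ii) X is left k-permutational; (iii) the left multiplication group LMlt(X), the subgroup of the symmetric group on X generated by all left translations L_x, is nilpotent of class at most k−1 (i.e. its (k−1)-st lower central series term is trivial). -/

import Mathlib

theorem Equiv.Perm.apply_inv_self {α : Type*} (f : Equiv.Perm α) (x : α) : f (f⁻¹ x) = x :=
  Equiv.apply_symm_apply f x

theorem Equiv.Perm.inv_apply_self {α : Type*} (f : Equiv.Perm α) (x : α) : f⁻¹ (f x) = x :=
  Equiv.symm_apply_apply f x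

section Birack15Aux

open scoped commutatorElement

variable {X : Type*} (o : X → X → X) (L : X → Equiv.Perm X)

/-- The left translations as elements of the closure subgroup. -/
def birack15ell : X → ↥(Subgroup.closure (Set.range L)) :=
  fun x => ⟨L x, Subgroup.subset_closure ⟨x, rfl⟩⟩

/-- The generating sets for the auxiliary normal series. -/
def birack15S (n : ℕ) : Set ↥(Subgroup.closure (Set.range L)) :=
  {t | ∃ x : X, ∃ y : X, ∃ l : List X, l.length = n ∧
    (t : Equiv.Perm X) = L (List.foldl o x l) * (L (List.foldl o y l))⁻¹}

/-- Generators for the base step combined with the `S n`. -/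
def birack15T (n : ℕ) : Set ↥(Subgroup.closure (Set.range L)) :=
  Nat.casesOn n (Set.range (birack15ell L)) (fun m => birack15S o L (m + 1))

variable (hL : ∀ x a : X, L x a = o x a)
    (hLD : ∀ x y z : X, o x (o y z) = o (o x y) (o x z))

include hL hLD

lemma birack15_conj (b a : X) : L (o b a) = L b * L a * (L b)⁻¹ := by
  ext z
  simp only [Equiv.Perm.mul_apply]
  rw [hL, hL, hL]
  conv_lhs => rw [← Equiv.Perm.apply_inv_self (L b) z]
  rw [hL, ← hLD]

lemma birack15_aut {g : Equiv.Perm X} (hg : g ∈ Subgroup.closure (Set.range L)) :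
    ∀ a b, g (o a b) = o (g a) (g b) := by
  induction hg using Subgroup.closure_induction with
  | mem x hx =>
    obtain ⟨w, rfl⟩ := hx
    intro a b
    rw [hL, hL, hL, hLD]
  | one => intro a b; rfl
  | mul x y hx hy ihx ihy =>
    intro a b
    simp only [Equiv.Perm.mul_apply, ihy, ihx]
  | inv x hx ih =>
    intro a b
    have h := ih (x⁻¹ a) (x⁻¹ b)
    simp only [Equiv.Perm.apply_inv_self] at h
    rw [← h, Equiv.Perm.inv_apply_self]

lemma birack15_fold {g : Equiv.Perm X} (hg : g ∈ Subgroup.closure (Set.range L)) :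
    ∀ (l : List X) (x : X), g (List.foldl o x l) = List.foldl o (g x) (l.map g) := by
  intro l
  induction l with
  | nil => intro x; rfl
  | cons a l ih =>
    intro x
    simp only [List.foldl_cons, List.map_cons, ih, birack15_aut o L hL hLD hg]

lemma birack15_conjL {g : Equiv.Perm X} (hg : g ∈ Subgroup.closure (Set.range L)) (z : X) :
    g * L z * g⁻¹ = L (g z) := by
  ext a
  simp only [Equiv.Perm.mul_apply]
  rw [hL, hL, birack15_aut o L hL hLD hg, Equiv.Perm.apply_inv_self]

lemma birack15_Sconj {n : ℕ} {s : ↥(Subgroup.closure (Set.range L))}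
    (hs : s ∈ birack15S o L n) (g : ↥(Subgroup.closure (Set.range L))) :
    g * s * g⁻¹ ∈ birack15S o L n := by
  obtain ⟨x, y, l, hlen, hval⟩ := hs
  refine ⟨(g : Equiv.Perm X) x, (g : Equiv.Perm X) y, l.map (g : Equiv.Perm X), by simp [hlen], ?_⟩
  have h1 : ((g * s * g⁻¹ : ↥(Subgroup.closure (Set.range L))) : Equiv.Perm X)
      = (g : Equiv.Perm X) * (s : Equiv.Perm X) * (g : Equiv.Perm X)⁻¹ := by
    push_cast; ring_nf
  rw [h1, hval]
  rw [← birack15_fold o L hL hLD g.2, ← birack15_fold o L hL hLD g.2]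
  rw [← birack15_conjL o L hL hLD g.2, ← birack15_conjL o L hL hLD g.2]
  group

lemma birack15_Nnormal (n : ℕ) : (Subgroup.closure (birack15S o L n)).Normal := by
  constructor
  intro t ht g
  induction ht using Subgroup.closure_induction with
  | mem s hs => exact Subgroup.subset_closure (birack15_Sconj o L hL hLD hs g)
  | one => simpa using Subgroup.one_mem _
  | mul a b ha hb iha ihb =>
    have h : g * (a * b) * g⁻¹ = (g * a * g⁻¹) * (g * b * g⁻¹) := by group
    rw [h]; exact mul_mem iha ihb
  | inv a ha iha =>
    have h : g * a⁻¹ * g⁻¹ = (g * a * g⁻¹)⁻¹ := by group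
    rw [h]; exact inv_mem iha

lemma birack15_append (x : X) (l : List X) (a : X) :
    List.foldl o x (l ++ [a]) = o (List.foldl o x l) a := by
  simp [List.foldl_append]

lemma birack15_Ssucc {n : ℕ} {s : ↥(Subgroup.closure (Set.range L))}
    (hs : s ∈ birack15S o L n) (z : X) :
    ⁅s, birack15ell L z⁆ ∈ birack15S o L (n + 1) := by
  obtain ⟨x, y, l, hlen, hval⟩ := hs
  set w : X := (L (List.foldl o y l))⁻¹ z with hw
  refine ⟨x, y, l ++ [w], by simp [hlen], ?_⟩
  have hz : z = List.foldl o y (l ++ [w]) := by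
    rw [birack15_append o L hL hLD, ← hL, hw, Equiv.Perm.apply_inv_self]
  have hsz : (s : Equiv.Perm X) z = List.foldl o x (l ++ [w]) := by
    rw [hval, birack15_append o L hL hLD, ← hL]
    simp [hw, Equiv.Perm.mul_apply]
  have hcomm : ((⁅s, birack15ell L z⁆ : ↥(Subgroup.closure (Set.range L))) : Equiv.Perm X)
      = (s : Equiv.Perm X) * L z * (s : Equiv.Perm X)⁻¹ * (L z)⁻¹ := by
    rw [commutatorElement_def]
    push_cast
    rfl
  rw [hcomm, birack15_conjL o L hL hLD s.2 z, hsz]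
  rw [hz]

lemma birack15_gen :
    Subgroup.closure (Set.range (birack15ell L)) = (⊤ : Subgroup ↥(Subgroup.closure (Set.range L))) := by
  have h := Subgroup.closure_preimage_eq_top (Set.range L)
  have heq : Set.range (birack15ell L)
      = ((Subgroup.closure (Set.range L)).subtype ⁻¹' (Set.range L)) := by
    ext t
    constructor
    · rintro ⟨w, rfl⟩; exact ⟨w, rfl⟩
    · rintro ⟨w, hw⟩
      exact ⟨w, Subtype.ext hw⟩
  rw [heq, h]

lemma birack15_key {n : ℕ} {T : Set ↥(Subgroup.closure (Set.range L))}
    (hT : ∀ s ∈ T, ∀ z : X, ⁅s, birack15ell L z⁆ ∈ Subgroup.closure (birack15S o L n))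
    {t : ↥(Subgroup.closure (Set.range L))} (ht : t ∈ Subgroup.closure T)
    (g : ↥(Subgroup.closure (Set.range L))) :
    ⁅t, g⁆ ∈ Subgroup.closure (birack15S o L n) := by
  haveI hN := birack15_Nnormal o L hL hLD n
  induction ht using Subgroup.closure_induction with
  | mem s hs =>
    have hg : g ∈ Subgroup.closure (Set.range (birack15ell L)) := by
      rw [birack15_gen o L hL hLD]; exact Subgroup.mem_top g
    induction hg using Subgroup.closure_induction with
    | mem h hh =>
      obtain ⟨z, rfl⟩ := hh
      exact hT s hs z
    | one => simpa using Subgroup.one_mem _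
    | mul a b ha hb iha ihb =>
      have h : ⁅s, a * b⁆ = ⁅s, a⁆ * (a * ⁅s, b⁆ * a⁻¹) := by group
      rw [h]
      exact mul_mem iha (hN.conj_mem _ ihb a)
    | inv a ha iha =>
      have h : ⁅s, a⁻¹⁆ = a⁻¹ * ⁅s, a⁆⁻¹ * a := by group
      rw [h]
      have := hN.conj_mem _ (inv_mem iha) a⁻¹
      simpa using this
  | one => simpa using Subgroup.one_mem _
  | mul a b ha hb iha ihb =>
    have h : ⁅a * b, g⁆ = (a * ⁅b, g⁆ * a⁻¹) * ⁅a, g⁆ := by group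
    rw [h]
    exact mul_mem (hN.conj_mem _ ihb a) iha
  | inv a ha iha =>
    have h : ⁅a⁻¹, g⁆ = a⁻¹ * ⁅a, g⁆⁻¹ * a := by group
    rw [h]
    have := hN.conj_mem _ (inv_mem iha) a⁻¹
    simpa using this

lemma birack15_Tcomm (hidem : ∀ x : X, o x x = x) (m : ℕ) :
    ∀ s ∈ birack15T o L m, ∀ z : X,
      ⁅s, birack15ell L z⁆ ∈ Subgroup.closure (birack15S o L (m + 1)) := by
  cases m with
  | zero =>
    rintro s ⟨x, rfl⟩ z
    refine Subgroup.subset_closure ⟨x, z, [z], rfl, ?_⟩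
    have hcomm : ((⁅birack15ell L x, birack15ell L z⁆ :
        ↥(Subgroup.closure (Set.range L))) : Equiv.Perm X)
        = L x * L z * (L x)⁻¹ * (L z)⁻¹ := by
      rw [commutatorElement_def]; push_cast; rfl
    rw [hcomm]
    simp only [List.foldl_cons, List.foldl_nil]
    rw [← birack15_conj o L hL hLD x z, hidem z]
  | succ m =>
    intro s hs z
    exact Subgroup.subset_closure (birack15_Ssucc o L hL hLD hs z)

lemma birack15_lcs (hidem : ∀ x : X, o x x = x) (m : ℕ) :
    Subgroup.lowerCentralSeries (⊤ : Subgroup ↥(Subgroup.closure (Set.range L))) m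
      ≤ Subgroup.closure (birack15T o L m) := by
  induction m with
  | zero =>
    rw [Subgroup.lowerCentralSeries_zero]
    rw [show birack15T o L 0 = Set.range (birack15ell L) from rfl, birack15_gen o L hL hLD]
  | succ m ih =>
    have hstep : Subgroup.lowerCentralSeries (⊤ : Subgroup ↥(Subgroup.closure (Set.range L))) (m + 1)
        = ⁅Subgroup.lowerCentralSeries (⊤ : Subgroup ↥(Subgroup.closure (Set.range L))) m,
            (⊤ : Subgroup ↥(Subgroup.closure (Set.range L)))⁆ := rfl
    rw [hstep]
    rw [show birack15T o L (m + 1) = birack15S o L (m + 1) from rfl]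
    rw [Subgroup.commutator_le]
    intro g₁ hg₁ g₂ _
    exact birack15_key o L hL hLD (birack15_Tcomm o L hL hLD hidem m) (ih hg₁) g₂

lemma birack15_B (hidem : ∀ x : X, o x x = x) (l : List X) :
    ∀ x y : X, birack15ell L (List.foldl o x l) * (birack15ell L (List.foldl o y l))⁻¹
      ∈ Subgroup.lowerCentralSeries (⊤ : Subgroup ↥(Subgroup.closure (Set.range L))) l.length := by
  induction l using List.reverseRecOn with
  | nil => intro x y; exact Subgroup.mem_top _
  | append_singleton l a ih =>
    intro x y
    set w := birack15ell L (List.foldl o x l) with hwdef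
    set v := birack15ell L (List.foldl o y l) with hvdef
    have hx : birack15ell L (List.foldl o x (l ++ [a])) = w * birack15ell L a * w⁻¹ := by
      apply Subtype.ext
      push_cast
      rw [birack15_append o L hL hLD]
      exact birack15_conj o L hL hLD _ a
    have hy : birack15ell L (List.foldl o y (l ++ [a])) = v * birack15ell L a * v⁻¹ := by
      apply Subtype.ext
      push_cast
      rw [birack15_append o L hL hLD]
      exact birack15_conj o L hL hLD _ a
    rw [hx, hy]
    have hvw : v⁻¹ * w ∈ Subgroup.lowerCentralSeries (⊤ : Subgroup ↥(Subgroup.closure (Set.range L))) l.length := by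
      have h := (Subgroup.lowerCentralSeries_normal ⊤ l.length).conj_mem _ (ih x y) v⁻¹
      have heq : v⁻¹ * (w * v⁻¹) * (v⁻¹)⁻¹ = v⁻¹ * w := by group
      rwa [heq] at h
    have hc : ⁅v⁻¹ * w, birack15ell L a⁆
        ∈ Subgroup.lowerCentralSeries (⊤ : Subgroup ↥(Subgroup.closure (Set.range L))) (l.length + 1) := by
      have hstep : Subgroup.lowerCentralSeries (⊤ : Subgroup ↥(Subgroup.closure (Set.range L))) (l.length + 1)
          = ⁅Subgroup.lowerCentralSeries (⊤ : Subgroup ↥(Subgroup.closure (Set.range L))) l.length,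
              (⊤ : Subgroup ↥(Subgroup.closure (Set.range L)))⁆ := rfl
      rw [hstep]
      exact Subgroup.commutator_mem_commutator hvw (Subgroup.mem_top _)
    have heq : (w * birack15ell L a * w⁻¹) * (v * birack15ell L a * v⁻¹)⁻¹
        = v * ⁅v⁻¹ * w, birack15ell L a⁆ * v⁻¹ := by group
    rw [heq]
    have h := (Subgroup.lowerCentralSeries_normal ⊤ (l.length + 1)).conj_mem _ hc v
    simp only [List.length_append, List.length_cons, List.length_nil]
    simpa using h

end Birack15Aux

/-- For a left distributive idempotent birack `(X, o, od, u, ud)`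
(where `o` is `∘`, `od` is `\∘`, `u` is `•`, `ud` is `/•`) and `k ≥ 1`, the following
are equivalent: (i) left `k`-reductivity; (ii) left `k`-permutationality;
(iii) the left multiplication group `LMlt(X) = ⟨L_x : x ∈ X⟩ ≤ Sym(X)` is nilpotent of
class at most `k-1`, i.e. its `(k-1)`-st lower central series term is trivial.
Here `L : X → Equiv.Perm X` is the family of left translations (`L x a = x∘a`), and
`(…((a∘x₁)∘x₂)…)∘x_k` is encoded as `List.foldl o a [x₁,…,x_k]`. -/
theorem stmt_15 {X : Type*} (o od u ud : X → X → X)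
    (h₁ : ∀ x y : X, o x (od x y) = y)
    (h₂ : ∀ x y : X, od x (o x y) = y)
    (h₃ : ∀ x y : X, u (ud y x) x = y)
    (h₄ : ∀ x y : X, ud (u y x) x = y)
    (h₅ : ∀ x y z : X, o x (o y z) = o (o x y) (o (u x y) z))
    (h₆ : ∀ x y z : X, u (o x y) (o (u x y) z) = o (u x (o y z)) (u y z))
    (h₇ : ∀ x y z : X, u (u x y) z = u (u x (o y z)) (u y z))
    (hLD : ∀ x y z : X, o x (o y z) = o (o x y) (o x z))
    (hidem : ∀ x : X, o x x = x ∧ u x x = x)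
    (L : X → Equiv.Perm X) (hL : ∀ x a : X, L x a = o x a)
    (k : ℕ) (hk : 1 ≤ k) :
    List.TFAE
      [∀ (x₀ x₁ : X) (l : List X), l.length + 1 = k →
         List.foldl o x₀ (x₁ :: l) = List.foldl o x₁ l,
       ∀ (x y : X) (l : List X), l.length = k →
         List.foldl o x l = List.foldl o y l,
       Subgroup.lowerCentralSeries (⊤ : Subgroup ↥(Subgroup.closure (Set.range L))) (k - 1) = ⊥] := by
  have hid : ∀ x : X, o x x = x := fun x => (hidem x).1
  tfae_have 1 → 2 := by
    intro h1 x y l hlen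
    rcases l with _ | ⟨a, l'⟩
    · simp only [List.length_nil] at hlen; omega
    · have hlen' : l'.length + 1 = k := by simpa using hlen
      rw [h1 x a l' hlen', h1 y a l' hlen']
  tfae_have 2 → 1 := by
    intro h2 x₀ x₁ l hlen
    have h := h2 x₀ x₁ (x₁ :: l) (by simpa using hlen)
    rw [h]
    simp only [List.foldl_cons, hid x₁]
  tfae_have 2 → 3 := by
    intro h2
    refine le_antisymm ?_ bot_le
    refine le_trans (birack15_lcs o L hL hLD hid (k - 1)) ?_
    rw [← Subgroup.closure_singleton_one]
    apply Subgroup.closure_mono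
    obtain _ | k' := k
    · omega
    · simp only [Nat.add_sub_cancel]
      cases k' with
      | zero =>
        rintro t ⟨x, rfl⟩
        simp only [Set.mem_singleton_iff]
        have : L x = 1 := by
          ext a
          rw [hL]
          have h := h2 x a [a] rfl
          simpa [hid a] using h
        exact Subtype.ext this
      | succ m =>
        rintro t ⟨x, y, l, hlen, hval⟩
        simp only [Set.mem_singleton_iff]
        apply Subtype.ext
        have hLeq : L (List.foldl o x l) = L (List.foldl o y l) := by
          ext a
          rw [hL, hL, ← birack15_append o L hL hLD, ← birack15_append o L hL hLD]
          exact h2 x y (l ++ [a]) (by simp [hlen])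
        show (t : Equiv.Perm X) = ((1 : ↥(Subgroup.closure (Set.range L))) : Equiv.Perm X)
        rw [hval, hLeq]
        simp
  tfae_have 3 → 2 := by
    intro h3 x y l hlen
    rcases List.eq_nil_or_concat l with rfl | ⟨l', a, rfl⟩
    · simp only [List.length_nil] at hlen; omega
    · rw [List.concat_eq_append] at hlen ⊢
      have hlen' : l'.length = k - 1 := by
        simp only [List.length_append, List.length_cons, List.length_nil] at hlen
        omega
      have hmem := birack15_B o L hL hLD hid l' x y
      rw [hlen', h3] at hmem
      have heq : birack15ell L (List.foldl o x l') = birack15ell L (List.foldl o y l') := by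
        have h1 := Subgroup.mem_bot.mp hmem
        have := mul_inv_eq_one.mp h1
        exact this
      have hLeq : L (List.foldl o x l') = L (List.foldl o y l') := congrArg Subtype.val heq
      rw [birack15_append o L hL hLD, birack15_append o L hL hLD, ← hL, ← hL, hLeq]
  tfae_finish
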